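/- arXiv:1904.07927 — 3 statements merged into one kernel-verified Lean document; each statement's English description precedes it below -/
import Mathlib

section
/- Let G = ⟨a, b | a²b⁻²ab⁻²a²ba²baba²b = 1⟩ with a left-ordering ≺, and set x = b⁻²a, μ = b⁻²ab⁻²ab⁻¹. If a ≺ 1 and b ≺ 1, then 1 ≺ x and 1 ≺ μ. -/
/-- The single relator `a²b⁻²ab⁻²a²ba²baba²b` of the presentation of `π₁(v2503)`,
with `a`, `b` the generators of the free group on two letters. -/
def rel2503 : FreeGroup (Fin 2) :=
  let a : FreeGroup (Fin 2) := FreeGroup.of 0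
  let b : FreeGroup (Fin 2) := FreeGroup.of 1
  a ^ 2 * b⁻¹ ^ 2 * a * b⁻¹ ^ 2 * a ^ 2 * b * a ^ 2 * b * a * b * a ^ 2 * b

/-- The fundamental group of `v2503`: `⟨a, b | a²b⁻²ab⁻²a²ba²baba²b = 1⟩`. -/
abbrev G2503 : Type := PresentedGroup ({rel2503} : Set (FreeGroup (Fin 2)))

/-- The generator `a`. -/
def ga : G2503 := PresentedGroup.of 0
/-- The generator `b`. -/
def gb : G2503 := PresentedGroup.of 1

/-- `x = b⁻²a`. -/
def gx : G2503 := gb⁻¹ ^ 2 * ga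
/-- `y = ba²`. -/
def gy : G2503 := gb * ga ^ 2
/-- The homological meridian `μ = b⁻²ab⁻²ab⁻¹`. -/
def gmu : G2503 := gb⁻¹ ^ 2 * ga * gb⁻¹ ^ 2 * ga * gb⁻¹
/-- The homological longitude `λ = a⁻²b⁻¹a⁻²b`. -/
def glam : G2503 := ga⁻¹ ^ 2 * gb⁻¹ * ga⁻¹ ^ 2 * gb

/-- The relator holds in `G2503`. -/
lemma hrel2503 :
    ga ^ 2 * gb⁻¹ ^ 2 * ga * gb⁻¹ ^ 2 * ga ^ 2 * gb * ga ^ 2 * gb * ga * gb * ga ^ 2 * gb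
      = 1 := by
  have h : (QuotientGroup.mk rel2503 : G2503) = 1 := by
    rw [QuotientGroup.eq_one_iff]
    exact Subgroup.subset_normalClosure (Set.mem_singleton _)
  simp only [ga, gb, PresentedGroup.of, ← map_pow, ← map_inv, ← map_mul]
  exact h

/-- The relator rewritten in terms of `x`. -/
lemma hrel2503x [LinearOrder G2503] :
    ga ^ 2 * gx * gx * ga * gb * ga ^ 2 * gb * ga * gb * ga ^ 2 * gb = 1 := by
  have := hrel2503
  rw [gx]
  group at this ⊢
  exact this

/-- Given a left-ordering of `π₁(v2503)`, if `a ≺ 1` and `b ≺ 1` then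
`1 ≺ x` and `1 ≺ μ`, where `x = b⁻²a` and `μ` is the homological meridian. -/
theorem case_II_signs [LinearOrder G2503] [CovariantClass G2503 G2503 (· * ·) (· < ·)]
    (ha : ga < 1) (hb : gb < 1) : 1 < gx ∧ 1 < gmu := by
  -- basic combination lemma: product of a negative with a nonpositive is negative
  have key : ∀ u v : G2503, u < 1 → v ≤ 1 → u * v < 1 := by
    intro u v hu hv
    rcases hv.lt_or_eq with h | h
    · calc u * v < u * 1 := mul_lt_mul_right h u
        _ = u := mul_one u
        _ < 1 := hu
    · rw [h, mul_one]; exact hu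
  have ha2 : ga ^ 2 < 1 := by
    rw [sq]; exact key _ _ ha ha.le
  have hx : 1 < gx := by
    by_contra hx
    push_neg at hx
    have h1 : ga ^ 2 * gx < 1 := key _ _ ha2 hx
    have h2 : ga ^ 2 * gx * gx < 1 := key _ _ h1 hx
    have h3 := key _ _ h2 ha.le
    have h4 := key _ _ h3 hb.le
    have h5 := key _ _ h4 ha2.le
    have h6 := key _ _ h5 hb.le
    have h7 := key _ _ h6 ha.le
    have h8 := key _ _ h7 hb.le
    have h9 := key _ _ h8 ha2.le
    have h10 := key _ _ h9 hb.le
    rw [hrel2503x] at h10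
    exact lt_irrefl 1 h10
  have hbinv : (1 : G2503) < gb⁻¹ := one_lt_inv_of_inv (by simpa using hb)
  have hx2 : 1 < gx * gx := by
    calc (1 : G2503) < gx := hx
      _ = gx * 1 := (mul_one gx).symm
      _ < gx * gx := mul_lt_mul_right hx gx
  have hmu : gmu = gx * gx * gb⁻¹ := by
    rw [gmu, gx]; group
  refine ⟨hx, ?_⟩
  rw [hmu]
  calc (1 : G2503) < gx * gx := hx2
    _ = gx * gx * 1 := (mul_one _).symm
    _ < gx * gx * gb⁻¹ := mul_lt_mul_right hbinv _
end

section
/- Let G = ⟨a, b | a²b⁻²ab⁻²a²ba²baba²b = 1⟩ with a left-ordering ≺, μ = b⁻²ab⁻²ab⁻¹, λ = a⁻²b⁻¹a⁻²b. Then the case a ≺ 1 ≺ b together with μ⁻¹λ ≺ 1 is impossible. -/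
/-- The relator holds in `G2503`. -/
theorem rel_eq_one :
    ga ^ 2 * gb⁻¹ ^ 2 * ga * gb⁻¹ ^ 2 * ga ^ 2 * gb * ga ^ 2 * gb * ga * gb * ga ^ 2 * gb
      = (1 : G2503) := by
  have h1 : PresentedGroup.mk ({rel2503} : Set (FreeGroup (Fin 2))) rel2503 = 1 := by
    have : rel2503 ∈ Subgroup.normalClosure ({rel2503} : Set (FreeGroup (Fin 2))) :=
      Subgroup.subset_normalClosure (Set.mem_singleton _)
    exact (QuotientGroup.eq_one_iff _).mpr this
  have h2 : PresentedGroup.mk ({rel2503} : Set (FreeGroup (Fin 2))) rel2503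
      = ga ^ 2 * gb⁻¹ ^ 2 * ga * gb⁻¹ ^ 2 * ga ^ 2 * gb * ga ^ 2 * gb * ga * gb * ga ^ 2 * gb := by
    simp only [rel2503, map_mul, map_pow, map_inv]
    rfl
  rw [← h2, h1]

/-- Given a left-ordering of `π₁(v2503)`, the case `a ≺ 1 ≺ b` together with
`μ⁻¹λ ≺ 1` is impossible. -/
theorem case_IV_impossible [LinearOrder G2503] [CovariantClass G2503 G2503 (· * ·) (· < ·)]
    (ha : ga < 1) (hb : 1 < gb) (h : gmu⁻¹ * glam < 1) : False := by
  -- basic sign facts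
  have mulneg : ∀ u v : G2503, u < 1 → v < 1 → u * v < 1 := fun u v hu hv =>
    (mul_lt_of_lt_one_right' u hv).trans hu
  have lemul : ∀ u v : G2503, 1 ≤ v → u ≤ u * v := fun u v hv =>
    hv.lt_or_eq.elim (fun h' => (lt_mul_of_one_lt_right' u h').le)
      (fun h' => by rw [← h', mul_one])
  have hbinv : gb⁻¹ < 1 := by
    have := mul_lt_mul_right hb gb⁻¹; simpa using this
  have hainv : (1 : G2503) < ga⁻¹ := by
    have := mul_lt_mul_right ha ga⁻¹; simpa using this
  -- x < 1
  have hx : gx < 1 := by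
    unfold gx
    exact mulneg _ _ (by rw [sq]; exact mulneg _ _ hbinv hbinv) ha
  have hxinv : (1 : G2503) < gx⁻¹ := by
    have := mul_lt_mul_right hx gx⁻¹; simpa using this
  -- μ < 1
  have hmu : gmu < 1 := by
    unfold gmu
    have hb2 : gb⁻¹ ^ 2 < 1 := by rw [sq]; exact mulneg _ _ hbinv hbinv
    exact mulneg _ _ (mulneg _ _ (mulneg _ _ (mulneg _ _ hb2 ha) hb2) ha) hbinv
  -- key identity: μ⁻¹ λ = y a⁻¹ y² x⁻¹ in G2503
  have key : gmu⁻¹ * glam = gy * ga⁻¹ * gy ^ 2 * gx⁻¹ := by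
    have hR := rel_eq_one
    set R : G2503 :=
      ga ^ 2 * gb⁻¹ ^ 2 * ga * gb⁻¹ ^ 2 * ga ^ 2 * gb * ga ^ 2 * gb * ga * gb * ga ^ 2 * gb
      with hRdef
    set c : G2503 := gb * ga * gb * ga ^ 2 * gb * ga * gb * ga ^ 2 * gb with hcdef
    have hconj : gy * ga⁻¹ * gy ^ 2 * gx⁻¹ * (gmu⁻¹ * glam)⁻¹ = c * R * c⁻¹ := by
      rw [hRdef, hcdef]
      unfold gmu glam gx gy
      simp only [sq]
      group
      simp only [sq, zpow_two, mul_assoc]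
    rw [hR, mul_one, mul_inv_cancel] at hconj
    exact (mul_inv_eq_one.mp hconj).symm
  -- y < 1
  have hy : gy < 1 := by
    by_contra hcon
    push_neg at hcon
    have h1 : (1 : G2503) ≤ gy := hcon
    have hy2 : (1 : G2503) ≤ gy ^ 2 := by
      rw [sq]
      exact h1.trans (lemul _ _ h1)
    have : (1 : G2503) < gy * ga⁻¹ * gy ^ 2 * gx⁻¹ :=
      lt_of_le_of_lt
        (h1.trans ((le_of_lt (lt_mul_of_one_lt_right' gy hainv)).trans
          (lemul _ _ hy2)))
        (lt_mul_of_one_lt_right' _ hxinv)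
    rw [← key] at this
    exact absurd h (not_lt_of_gt this)
  have hyinv : (1 : G2503) < gy⁻¹ := by
    have := mul_lt_mul_right hy gy⁻¹; simpa using this
  -- λ = y⁻² b² > 1
  have hlam_eq : glam = gy⁻¹ * gy⁻¹ * gb * gb := by
    unfold glam gy
    group
  have hlam : (1 : G2503) < glam := by
    rw [hlam_eq]
    exact hyinv.trans ((lt_mul_of_one_lt_right' _ hyinv).trans
      ((lt_mul_of_one_lt_right' _ hb).trans (lt_mul_of_one_lt_right' _ hb)))
  -- from h : μ⁻¹ λ < 1 we get λ < μ, hence 1 < μ, contradiction with μ < 1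
  have hlm : glam < gmu := by
    have := mul_lt_mul_right h gmu; simpa using this
  exact absurd (hlam.trans hlm) (not_lt_of_gt hmu)
end

section
/- Let G = ⟨a, b | a²b⁻²ab⁻²a²ba²baba²b = 1⟩, μ = b⁻²ab⁻²ab⁻¹, λ = a⁻²b⁻¹a⁻²b. For every left-ordering ≺ of G, if μ⁻¹λ ≺ 1 then μ⁻ⁿλ ≺ 1 for all integers n ≥ 1. -/
/-! ### Auxiliary order lemmas (left-invariant orders) -/

section OrderHelpers

variable {G : Type*} [Group G] [LinearOrder G]
  [CovariantClass G G (· * ·) (· < ·)] [CovariantClass G G (· * ·) (· ≤ ·)]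

private lemma hL1 {x y : G} (hx : 1 ≤ x) (hy : 1 ≤ y) : 1 ≤ x * y :=
  hx.trans (by simpa using mul_le_mul_right hy x)

private lemma hL4 {x : G} (hx : x ≤ 1) : 1 ≤ x⁻¹ := by
  simpa using mul_le_mul_right hx x⁻¹

private lemma hL5 {x : G} (hx : 1 ≤ x) : x⁻¹ ≤ 1 := by
  simpa using mul_le_mul_right hx x⁻¹

private lemma hL6 {x y : G} (hx : x < 1) (hy : y < 1) : x * y < 1 :=
  lt_trans (by simpa using mul_lt_mul_right hy x) hx

private lemma hL7 {x y : G} (hx : x < 1) (hy : y ≤ 1) : x * y < 1 :=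
  lt_of_le_of_lt (by simpa using mul_le_mul_right hy x) hx

private lemma hL3 {x y : G} (hx : x ≤ 1) (hy : y < 1) : x * y < 1 :=
  lt_of_lt_of_le (by simpa using mul_lt_mul_right hy x) hx

end OrderHelpers

/-! ### Consequences of the relator -/

/-- The relator holds in `G2503`. -/
private lemma grel : ga * ga * gb⁻¹ * gb⁻¹ * ga * gb⁻¹ * gb⁻¹ * ga * ga * gb * ga * ga * gb *
    ga * gb * ga * ga * gb = 1 := by
  have h1 : ((PresentedGroup.mk {rel2503}) rel2503 : G2503) = 1 :=
    (QuotientGroup.eq_one_iff _).mpr (Subgroup.subset_normalClosure (Set.mem_singleton _))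
  have h2 : ((PresentedGroup.mk {rel2503}) rel2503 : G2503) =
      ga ^ 2 * gb⁻¹ ^ 2 * ga * gb⁻¹ ^ 2 * ga ^ 2 * gb * ga ^ 2 * gb * ga * gb * ga ^ 2 * gb := by
    simp only [rel2503, map_mul, map_pow, map_inv]
    rfl
  rw [h2] at h1
  calc ga * ga * gb⁻¹ * gb⁻¹ * ga * gb⁻¹ * gb⁻¹ * ga * ga * gb * ga * ga * gb * ga * gb * ga *
        ga * gb
      = ga ^ 2 * gb⁻¹ ^ 2 * ga * gb⁻¹ ^ 2 * ga ^ 2 * gb * ga ^ 2 * gb * ga * gb * ga ^ 2 * gb :=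
        by simp only [pow_two, mul_assoc]
    _ = 1 := h1

/-- `μ⁻¹λ = baba²bab²` in `G2503`. -/
private lemma hI1 : gmu⁻¹ * glam = gb * ga * gb * ga * ga * gb * ga * gb * gb := by
  calc gmu⁻¹ * glam
      = (gb * (ga * gb * ga * ga * gb * ga * gb * ga * ga * gb)) *
        (ga * ga * gb⁻¹ * gb⁻¹ * ga * gb⁻¹ * gb⁻¹ * ga * ga * gb * ga * ga * gb * ga * gb * ga *
          ga * gb)⁻¹ *
        (ga * gb * ga * ga * gb * ga * gb * ga * ga * gb)⁻¹ * gb⁻¹ *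
        (gb * ga * gb * ga * ga * gb * ga * gb * gb) := by
        unfold gmu glam
        group
    _ = gb * ga * gb * ga * ga * gb * ga * gb * gb := by rw [grel]; group

/-- `μ = a⁻²b⁻¹a⁻²b⁻¹a⁻¹b⁻¹a⁻²b⁻¹a⁻¹b⁻¹` in `G2503`. -/
private lemma hI2 : gmu = ga⁻¹ * ga⁻¹ * gb⁻¹ * ga⁻¹ * ga⁻¹ * gb⁻¹ * ga⁻¹ * gb⁻¹ * ga⁻¹ * ga⁻¹ *
    gb⁻¹ * ga⁻¹ * gb⁻¹ := by
  calc gmu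
      = ga⁻¹ * ga⁻¹ *
        (ga * ga * gb⁻¹ * gb⁻¹ * ga * gb⁻¹ * gb⁻¹ * ga * ga * gb * ga * ga * gb * ga * gb * ga *
          ga * gb) *
        ga * ga *
        (ga⁻¹ * ga⁻¹ * gb⁻¹ * ga⁻¹ * ga⁻¹ * gb⁻¹ * ga⁻¹ * gb⁻¹ * ga⁻¹ * ga⁻¹ * gb⁻¹ * ga⁻¹ *
          gb⁻¹) := by
        unfold gmu
        group
    _ = ga⁻¹ * ga⁻¹ * gb⁻¹ * ga⁻¹ * ga⁻¹ * gb⁻¹ * ga⁻¹ * gb⁻¹ * ga⁻¹ * ga⁻¹ * gb⁻¹ * ga⁻¹ *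
        gb⁻¹ := by rw [grel]; group

/-- The key certificate: `λ·b⁻²·a·λ·b⁻¹·a²·(μ⁻¹λ)·b⁻²·a = 1` in `G2503`. -/
private lemma hcert : glam * gb⁻¹ * gb⁻¹ * ga * glam * gb⁻¹ * ga * ga * (gmu⁻¹ * glam) * gb⁻¹ *
    gb⁻¹ * ga = 1 := by
  calc glam * gb⁻¹ * gb⁻¹ * ga * glam * gb⁻¹ * ga * ga * (gmu⁻¹ * glam) * gb⁻¹ * gb⁻¹ * ga
      = (ga⁻¹ * gb * ga * ga * gb) *
        (ga * ga * gb⁻¹ * gb⁻¹ * ga * gb⁻¹ * gb⁻¹ * ga * ga * gb * ga * ga * gb * ga * gb * ga *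
          ga * gb)⁻¹ *
        (ga⁻¹ * gb * ga * ga * gb)⁻¹ := by
        unfold gmu glam
        group
    _ = 1 := by rw [grel]; group

private lemma hlam_decomp : glam = gmu * (gmu⁻¹ * glam) := by group

section Main

variable [LinearOrder G2503] [CovariantClass G2503 G2503 (· * ·) (· < ·)]

private lemma one_le_gmu (h : gmu⁻¹ * glam < 1) : 1 ≤ gmu := by
  haveI : CovariantClass G2503 G2503 (· * ·) (· ≤ ·) := covariantClass_le_of_lt G2503 G2503 (· * ·)
  by_contra hc
  push_neg at hc
  rcases le_total ga 1 with ha | ha <;> rcases le_total gb 1 with hb | hb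
  · -- a ≤ 1, b ≤ 1 : μ ≥ 1 from hI2, contradiction
    have ha' : (1 : G2503) ≤ ga⁻¹ := hL4 ha
    have hb' : (1 : G2503) ≤ gb⁻¹ := hL4 hb
    have : (1 : G2503) ≤ gmu := by
      rw [hI2]
      exact hL1 (hL1 (hL1 (hL1 (hL1 (hL1 (hL1 (hL1 (hL1 (hL1 (hL1 (hL1 ha' ha') hb') ha') ha')
        hb') ha') hb') ha') ha') hb') ha') hb'
    exact absurd this (not_le.mpr hc)
  · -- a ≤ 1, 1 ≤ b : certificate gives a contradiction
    have hb' : gb⁻¹ ≤ (1 : G2503) := hL5 hb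
    have hlam1 : glam < 1 := by
      rw [hlam_decomp]; exact hL6 hc h
    have hlt : glam * gb⁻¹ * gb⁻¹ * ga * glam * gb⁻¹ * ga * ga * (gmu⁻¹ * glam) * gb⁻¹ *
        gb⁻¹ * ga < 1 :=
      hL7 (hL7 (hL7 (hL7 (hL7 (hL7 (hL7 (hL7 (hL7 (hL7 (hL7 hlam1 hb') hb') ha) hlam1.le) hb')
        ha) ha) h.le) hb') hb') ha
    rw [hcert] at hlt
    exact lt_irrefl 1 hlt
  · -- 1 ≤ a, b ≤ 1 : μ ≥ 1 directly, contradiction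
    have hb' : (1 : G2503) ≤ gb⁻¹ := hL4 hb
    have hmu' : gmu = gb⁻¹ * gb⁻¹ * ga * gb⁻¹ * gb⁻¹ * ga * gb⁻¹ := by unfold gmu; group
    have : (1 : G2503) ≤ gmu := by
      rw [hmu']
      exact hL1 (hL1 (hL1 (hL1 (hL1 (hL1 hb' hb') ha) hb') hb') ha) hb'
    exact absurd this (not_le.mpr hc)
  · -- 1 ≤ a, 1 ≤ b : μ⁻¹λ ≥ 1 from hI1, contradicting h
    have : (1 : G2503) ≤ gmu⁻¹ * glam := by
      rw [hI1]
      exact hL1 (hL1 (hL1 (hL1 (hL1 (hL1 (hL1 (hL1 hb ha) hb) ha) ha) hb) ha) hb) hb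
    exact absurd h (not_lt.mpr this)

end Main

/-- Lemma 3.1: for every left-ordering of `π₁(v2503)`, if `μ⁻¹λ ≺ 1` then
`μ⁻ⁿλ ≺ 1` for all integers `n ≥ 1`. -/
theorem mu_pow_lam_neg [LinearOrder G2503] [CovariantClass G2503 G2503 (· * ·) (· < ·)]
    (h : gmu⁻¹ * glam < 1) : ∀ n : ℤ, 1 ≤ n → gmu ^ (-n) * glam < 1 := by
  haveI : CovariantClass G2503 G2503 (· * ·) (· ≤ ·) := covariantClass_le_of_lt G2503 G2503 (· * ·)
  have hmu : 1 ≤ gmu := one_le_gmu h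
  intro n hn
  obtain ⟨m, rfl⟩ : ∃ m : ℕ, n = (m : ℤ) + 1 := ⟨(n - 1).toNat, by omega⟩
  have key : gmu ^ (-((m : ℤ) + 1)) * glam = (gmu ^ m)⁻¹ * (gmu⁻¹ * glam) := by
    rw [show -((m : ℤ) + 1) = (-(m : ℤ)) + (-1) by ring, zpow_add, zpow_neg, zpow_natCast,
      zpow_neg, zpow_one, mul_assoc]
  rw [key]
  have h1 : ∀ k : ℕ, (1 : G2503) ≤ gmu ^ k := by
    intro k
    induction k with
    | zero => simp
    | succ k ih => rw [pow_succ]; exact hL1 ih hmu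
  exact hL3 (hL5 (h1 m)) h
end
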